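/- Let X, Y be real Hilbert spaces, A : X → Y a bounded linear operator with a diagonal frame decomposition (u_λ, v_λ, κ_λ)_{λ∈Λ}, sup_λ κ_λ < ∞, and let (ū_λ)_λ be a dual frame of (u_λ)_λ whose synthesis operator T_ū : ℓ²(Λ) → X is bounded. Let (φ_α)_{α>0} be a non-linear regularizing filter satisfying Assumption B and define B_α(y) := ∑_λ κ_λ⁻¹ φ_α(κ_λ, ⟨y, v_λ⟩) ū_λ. Let (δ_k)_k and (α_k)_k be positive null sequences with δ_k²/α_k → 0, let y ∈ ran A, and suppose there exist α̃ > 0 and w ∈ ℓ²(Λ) with φ_{α̃}(κ_λ, w_λ) = ⟨y, v_λ⟩ for all λ. Let (y^k)_k in Y satisfy ‖y^k − y‖ ≤ δ_k. Then B_{α_k}(y^k) converges weakly in X, as k → ∞, to the unique x⁺ ∈ (ker A)^⊥ with A x⁺ = y. -/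

import Mathlib

open scoped ENNReal RealInnerProductSpace
open Filter

noncomputable section

/-- A non-linear regularizing filter: `φ α κ` is (F1) monotone, (F2) nonexpansive,
(F3) zero at zero, and (F4) converges pointwise to the identity as `α → 0`. -/
def IsRegFilter (φ : ℝ → ℝ → ℝ → ℝ) : Prop :=
  (∀ α > (0 : ℝ), ∀ κ > (0 : ℝ), Monotone (φ α κ)) ∧
  (∀ α > (0 : ℝ), ∀ κ > (0 : ℝ), ∀ x y : ℝ, |φ α κ x - φ α κ y| ≤ |x - y|) ∧
  (∀ α > (0 : ℝ), ∀ κ > (0 : ℝ), φ α κ 0 = 0) ∧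
  (∀ κ > (0 : ℝ), ∀ c : ℝ,
    Tendsto (fun α => φ α κ c) (nhdsWithin 0 (Set.Ioi 0)) (nhds c))

/-- Assumption B: (B1) `α ↦ |φ_α(κ,x)|` increases as `α` decreases, and (B2) there are
`d, e > 0` with `|φ_α(κ,x)| ≤ (eκ/√α)·|x|` whenever `|x| ≤ dα/κ`. -/
def AssumptionB (φ : ℝ → ℝ → ℝ → ℝ) : Prop :=
  (∀ κ > (0 : ℝ), ∀ x : ℝ, ∀ α β : ℝ, 0 < α → α ≤ β → |φ β κ x| ≤ |φ α κ x|) ∧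
  (∃ d > (0 : ℝ), ∃ e > (0 : ℝ), ∀ κ > (0 : ℝ), ∀ α > (0 : ℝ), ∀ x : ℝ,
    |x| ≤ d * α / κ → |φ α κ x| ≤ e * κ / Real.sqrt α * |x|)

set_option maxHeartbeats 2000000 in
/-- **Weak convergence of the non-linear filtered DFD.** Given a diagonal
frame decomposition `(u, v, κ)` of `A : X → Y`, a dual frame `ū` of `u` with bounded
synthesis operator `T`, a non-linear regularizing filter satisfying Assumption B, exact data
`y ∈ ran A` whose coefficients lie in the range of `Φ_{α̃,κ}`, noisy data `‖y^k − y‖ ≤ δ_k`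
with `δ_k, α_k → 0` and `δ_k²/α_k → 0`: the reconstructions `B_{α_k}(y^k)` converge weakly
to the unique `x⁺ ∈ (ker A)^⊥` with `A x⁺ = y`. -/
theorem statement11
    {X Y : Type*} [NormedAddCommGroup X] [InnerProductSpace ℝ X] [CompleteSpace X]
    [NormedAddCommGroup Y] [InnerProductSpace ℝ Y] [CompleteSpace Y]
    {Λ : Type*} [Countable Λ]
    (A : X →L[ℝ] Y) (u ubar : Λ → X) (v : Λ → Y) (κ : Λ → ℝ)
    (hκpos : ∀ l, 0 < κ l) (hκbd : BddAbove (Set.range κ))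
    (hu_mem : ∀ l, u l ∈ (LinearMap.ker (A : X →ₗ[ℝ] Y))ᗮ)
    (hu_frame : ∃ a b : ℝ, 0 < a ∧ a ≤ b ∧ ∀ x ∈ (LinearMap.ker (A : X →ₗ[ℝ] Y))ᗮ,
      Summable (fun l => ⟪x, u l⟫ ^ 2) ∧
      a * ‖x‖ ^ 2 ≤ ∑' l, ⟪x, u l⟫ ^ 2 ∧ ∑' l, ⟪x, u l⟫ ^ 2 ≤ b * ‖x‖ ^ 2)
    (hv_mem : ∀ l, v l ∈ (LinearMap.range (A : X →ₗ[ℝ] Y)).topologicalClosure)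
    (hv_frame : ∃ a b : ℝ, 0 < a ∧ a ≤ b ∧
      ∀ y ∈ (LinearMap.range (A : X →ₗ[ℝ] Y)).topologicalClosure,
        Summable (fun l => ⟪y, v l⟫ ^ 2) ∧
        a * ‖y‖ ^ 2 ≤ ∑' l, ⟪y, v l⟫ ^ 2 ∧ ∑' l, ⟪y, v l⟫ ^ 2 ≤ b * ‖y‖ ^ 2)
    (hquasi : ∀ l, ContinuousLinearMap.adjoint A (v l) = κ l • u l)
    (T : lp (fun _ : Λ => ℝ) 2 →L[ℝ] X)
    (hT : ∀ c : lp (fun _ : Λ => ℝ) 2, HasSum (fun l => c l • ubar l) (T c))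
    (hdual : ∀ x ∈ (LinearMap.ker (A : X →ₗ[ℝ] Y))ᗮ, HasSum (fun l => ⟪x, u l⟫ • ubar l) x)
    (φ : ℝ → ℝ → ℝ → ℝ) (hfilter : IsRegFilter φ) (hB : AssumptionB φ)
    (δ αs : ℕ → ℝ) (hδpos : ∀ k, 0 < δ k) (hαpos : ∀ k, 0 < αs k)
    (hδ0 : Tendsto δ atTop (nhds 0)) (hα0 : Tendsto αs atTop (nhds 0))
    (hrate : Tendsto (fun k => δ k ^ 2 / αs k) atTop (nhds 0))
    (y : Y) (hy : y ∈ LinearMap.range (A : X →ₗ[ℝ] Y))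
    (αt : ℝ) (hαt : 0 < αt) (w0 : lp (fun _ : Λ => ℝ) 2)
    (hw0 : ∀ l, φ αt (κ l) (w0 l) = ⟪y, v l⟫)
    (yk : ℕ → Y) (hyk : ∀ k, ‖yk k - y‖ ≤ δ k) :
    ∃ hck : ∀ k, Memℓp (fun l => φ (αs k) (κ l) ⟪yk k, v l⟫ / κ l) 2,
      ∀ xp : X, xp ∈ (LinearMap.ker (A : X →ₗ[ℝ] Y))ᗮ → A xp = y →
        ∀ w : X,
          Tendsto
            (fun k =>
              ⟪T (⟨fun l => φ (αs k) (κ l) ⟪yk k, v l⟫ / κ l, hck k⟩ :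
                lp (fun _ : Λ => ℝ) 2), w⟫)
            atTop (nhds ⟪xp, w⟫) := by
  classical
  obtain ⟨au, bu, haupos, haub, hu⟩ := hu_frame
  obtain ⟨av, bv, havpos, havb, hv⟩ := hv_frame
  obtain ⟨hB1, d, hd, e, he, hB2⟩ := hB
  obtain ⟨hφmono, hφlip, hφ0, hφconv⟩ := hfilter
  obtain ⟨Kb, hKb⟩ := hκbd
  have hKl : ∀ l, κ l ≤ Kb := fun l => hKb (Set.mem_range_self l)
  have hbv0 : (0:ℝ) ≤ bv := le_trans havpos.le havb
  have hbu0 : (0:ℝ) ≤ bu := le_trans haupos.le haub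
  have habs_sub : ∀ x y : ℝ, |x - y| ≤ |x| + |y| := fun x y => by
    rw [sub_eq_add_neg]; exact (abs_add_le _ _).trans (by rw [abs_neg])
  have hφabs : ∀ {α' κ' : ℝ}, 0 < α' → 0 < κ' → ∀ x : ℝ, |φ α' κ' x| ≤ |x| := by
    intro α' κ' hα' hκ' x
    have := hφlip α' hα' κ' hκ' x 0
    simpa [hφ0 α' hα' κ' hκ'] using this
  set M := (LinearMap.range (A : X →ₗ[ℝ] Y)).topologicalClosure with hM
  haveI : CompleteSpace M := (Submodule.isClosed_topologicalClosure _).completeSpace_coe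
  have hinner : ∀ (z : Y) (l : Λ), ⟪z, v l⟫ = ⟪(M.orthogonalProjectionOnto z : Y), v l⟫ := by
    intro z l
    have h0 : ⟪z - M.orthogonalProjectionOnto z, v l⟫ = 0 :=
      Submodule.inner_left_of_mem_orthogonal (hv_mem l)
        (Submodule.sub_starProjection_mem_orthogonal (K := M) z)
    rw [inner_sub_left] at h0
    linarith
  have hPnorm : ∀ z : Y, ‖(M.orthogonalProjectionOnto z : Y)‖ ≤ ‖z‖ := by
    intro z
    calc ‖(M.orthogonalProjectionOnto z : Y)‖ = ‖M.orthogonalProjectionOnto z‖ := rfl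
      _ ≤ ‖M.orthogonalProjectionOnto‖ * ‖z‖ := (M.orthogonalProjectionOnto).le_opNorm z
      _ ≤ 1 * ‖z‖ := by
          have := M.orthogonalProjectionOnto_norm_le
          nlinarith [norm_nonneg z]
      _ = ‖z‖ := one_mul _
  have hbsum : ∀ z : Y, Summable (fun l => ⟪z, v l⟫^2) ∧ ∑' l, ⟪z, v l⟫^2 ≤ bv * ‖z‖^2 := by
    intro z
    obtain ⟨hs, _, hub⟩ :=
      hv (M.orthogonalProjectionOnto z : Y) (SetLike.coe_mem _)
    have hcongr : (fun l => ⟪(M.orthogonalProjectionOnto z : Y), v l⟫^2)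
        = fun l => ⟪z, v l⟫^2 := by
      funext l; rw [← hinner]
    rw [hcongr] at hs hub
    refine ⟨hs, le_trans hub ?_⟩
    have h1 := hPnorm z
    have h2 : ‖(M.orthogonalProjectionOnto z : Y)‖^2 ≤ ‖z‖^2 :=
      pow_le_pow_left₀ (norm_nonneg _) h1 2
    nlinarith [hbv0, h2]
  have hbcomp : ∀ z : Y, ∀ l, |⟪z, v l⟫| ≤ Real.sqrt bv * ‖z‖ := by
    intro z l
    obtain ⟨hs, hub⟩ := hbsum z
    have h1 : ⟪z, v l⟫^2 ≤ bv * ‖z‖^2 :=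
      le_trans (Summable.le_tsum hs l fun j _ => sq_nonneg _) hub
    have h2 := Real.sqrt_le_sqrt h1
    rw [Real.sqrt_sq_eq_abs] at h2
    calc |⟪z, v l⟫| ≤ Real.sqrt (bv * ‖z‖^2) := h2
      _ = Real.sqrt bv * ‖z‖ := by
          rw [Real.sqrt_mul hbv0, Real.sqrt_sq (norm_nonneg z)]
  have hsq2 : ∀ f : Λ → ℝ, Summable (fun l => (f l)^2) → Memℓp f 2 := by
    intro f hf
    apply memℓp_gen
    simpa [ENNReal.toReal_ofNat, Real.rpow_natCast, sq_abs] using hf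
  have hck' : ∀ k, Summable (fun l => (φ (αs k) (κ l) ⟪yk k, v l⟫ / κ l)^2) := by
    intro k
    have hα := hαpos k
    have hsα : 0 < Real.sqrt (αs k) := Real.sqrt_pos.mpr hα
    obtain ⟨hbs, -⟩ := hbsum (yk k)
    set Mb := Real.sqrt bv * ‖yk k‖ with hMbdef
    have hMb0 : 0 ≤ Mb := mul_nonneg (Real.sqrt_nonneg _) (norm_nonneg _)
    set C := e / Real.sqrt (αs k) + Mb / (d * αs k) with hCdef
    have hC0 : 0 ≤ C := by positivity
    refine Summable.of_nonneg_of_le (fun l => sq_nonneg _) (fun l => ?_) (hbs.mul_left (C^2))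
    have hptw : |φ (αs k) (κ l) ⟪yk k, v l⟫ / κ l| ≤ C * |⟪yk k, v l⟫| := by
      have hκl := hκpos l
      rcases le_or_gt |⟪yk k, v l⟫| (d * αs k / κ l) with hcase | hcase
      · have h1 := hB2 (κ l) hκl (αs k) hα ⟪yk k, v l⟫ hcase
        rw [abs_div, abs_of_pos hκl, div_le_iff₀ hκl]
        have hCe : e / Real.sqrt (αs k) ≤ C := le_add_of_nonneg_right (by positivity)
        calc |φ (αs k) (κ l) ⟪yk k, v l⟫|
            ≤ e * κ l / Real.sqrt (αs k) * |⟪yk k, v l⟫| := h1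
          _ = (e / Real.sqrt (αs k)) * |⟪yk k, v l⟫| * κ l := by ring
          _ ≤ C * |⟪yk k, v l⟫| * κ l := by
              have := mul_le_mul_of_nonneg_right hCe (abs_nonneg ⟪yk k, v l⟫)
              exact mul_le_mul_of_nonneg_right this hκl.le
      · have hinv : 1 / κ l ≤ |⟪yk k, v l⟫| / (d * αs k) := by
          rw [div_le_div_iff₀ hκl (by positivity)]
          rw [div_lt_iff₀ hκl] at hcase
          linarith
        have hφb := hφabs hα hκl ⟪yk k, v l⟫
        have hMbb : |⟪yk k, v l⟫| ≤ Mb := hbcomp (yk k) l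
        calc |φ (αs k) (κ l) ⟪yk k, v l⟫ / κ l|
            = |φ (αs k) (κ l) ⟪yk k, v l⟫| * (1 / κ l) := by
              rw [abs_div, abs_of_pos hκl]; ring
          _ ≤ |⟪yk k, v l⟫| * (|⟪yk k, v l⟫| / (d * αs k)) :=
              mul_le_mul hφb hinv (by positivity) (abs_nonneg _)
          _ = |⟪yk k, v l⟫| / (d * αs k) * |⟪yk k, v l⟫| := by ring
          _ ≤ Mb / (d * αs k) * |⟪yk k, v l⟫| := by
              have h3 : |⟪yk k, v l⟫| / (d * αs k) ≤ Mb / (d * αs k) :=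
                (div_le_div_iff_of_pos_right (by positivity)).mpr hMbb
              exact mul_le_mul_of_nonneg_right h3 (abs_nonneg _)
          _ ≤ C * |⟪yk k, v l⟫| :=
              mul_le_mul_of_nonneg_right (le_add_of_nonneg_left (by positivity)) (abs_nonneg _)
    have h4 := pow_le_pow_left₀ (abs_nonneg _) hptw 2
    rw [sq_abs] at h4
    calc (φ (αs k) (κ l) ⟪yk k, v l⟫ / κ l)^2 ≤ (C * |⟪yk k, v l⟫|)^2 := h4
      _ = C^2 * ⟪yk k, v l⟫^2 := by rw [mul_pow, sq_abs]
  have hck : ∀ k, Memℓp (fun l => φ (αs k) (κ l) ⟪yk k, v l⟫ / κ l) 2 :=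
    fun k => hsq2 _ (hck' k)
  refine ⟨hck, ?_⟩
  intro xp hxp hAxp w
  obtain ⟨hccs, -, hccub⟩ := hu xp hxp
  have ha : ∀ l, ⟪y, v l⟫ = κ l * ⟪xp, u l⟫ := by
    intro l
    rw [← hAxp, ← ContinuousLinearMap.adjoint_inner_right A, hquasi l, real_inner_smul_right]
  set Mu := Real.sqrt bu * ‖xp‖ with hMudef
  have hMu0 : 0 ≤ Mu := by positivity
  have hMul : ∀ l, |⟪xp, u l⟫| ≤ Mu := by
    intro l
    have h1 : ⟪xp, u l⟫^2 ≤ bu * ‖xp‖^2 :=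
      le_trans (Summable.le_tsum hccs l fun j _ => sq_nonneg _) hccub
    have h2 := Real.sqrt_le_sqrt h1
    rw [Real.sqrt_sq_eq_abs] at h2
    calc |⟪xp, u l⟫| ≤ Real.sqrt (bu * ‖xp‖^2) := h2
      _ = Mu := by rw [hMudef, Real.sqrt_mul hbu0, Real.sqrt_sq (norm_nonneg xp)]
  have hccmem : Memℓp (fun l => ⟪xp, u l⟫) 2 := hsq2 _ hccs
  set Cp : lp (fun _ : Λ => ℝ) 2 := ⟨fun l => ⟪xp, u l⟫, hccmem⟩ with hCpdef
  have hTC : T Cp = xp := (hT Cp).unique (hdual xp hxp)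
  
  -- coefficient sequences
  set g : ℕ → Λ → ℝ := fun k l => φ (αs k) (κ l) ⟪yk k, v l⟫ / κ l with hgdef
  set nn : ℕ → Λ → ℝ := fun k l => ⟪yk k - y, v l⟫ with hnndef
  have hbn : ∀ k l, ⟪yk k, v l⟫ = κ l * ⟪xp, u l⟫ + nn k l := by
    intro k l
    have h1 : nn k l = ⟪yk k, v l⟫ - ⟪y, v l⟫ := by
      simp only [hnndef]; exact inner_sub_left _ _ _
    rw [h1, ha l]; ring
  have hnsum : ∀ k, Summable (fun l => (nn k l)^2) := by
    intro k
    simp only [hnndef]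
    exact (hbsum (yk k - y)).1
  have hntsum : ∀ k, ∑' l, (nn k l)^2 ≤ bv * (δ k)^2 := by
    intro k
    have h2 : ∑' l, (nn k l)^2 ≤ bv * ‖yk k - y‖^2 := by
      simp only [hnndef]; exact (hbsum (yk k - y)).2
    refine h2.trans ?_
    have h3 : ‖yk k - y‖^2 ≤ (δ k)^2 :=
      pow_le_pow_left₀ (norm_nonneg _) (hyk k) 2
    nlinarith [hbv0, h3]
  have hncomp : ∀ k l, |nn k l| ≤ Real.sqrt bv * δ k := by
    intro k l
    have h1 : |nn k l| ≤ Real.sqrt bv * ‖yk k - y‖ := by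
      simp only [hnndef]; exact hbcomp (yk k - y) l
    refine h1.trans ?_
    exact mul_le_mul_of_nonneg_left (hyk k) (Real.sqrt_nonneg _)
  set E : ℕ → Λ → ℝ :=
    fun k l => (φ (αs k) (κ l) (κ l * ⟪xp, u l⟫) - κ l * ⟪xp, u l⟫) / κ l with hEdef
  set N : ℕ → Λ → ℝ :=
    fun k l => (φ (αs k) (κ l) ⟪yk k, v l⟫ - φ (αs k) (κ l) (κ l * ⟪xp, u l⟫)) / κ l with hNdef
  have hsplit : ∀ k l, g k l - ⟪xp, u l⟫ = N k l + E k l := by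
    intro k l
    have hκl := (hκpos l).ne'
    simp only [hgdef, hNdef, hEdef]
    field_simp
    ring
  have hEb : ∀ k l, |E k l| ≤ 2 * |⟪xp, u l⟫| := by
    intro k l
    have hκl := hκpos l
    have h1 : |φ (αs k) (κ l) (κ l * ⟪xp, u l⟫) - κ l * ⟪xp, u l⟫| ≤ 2 * |κ l * ⟪xp, u l⟫| := by
      have h2 := hφabs (hαpos k) hκl (κ l * ⟪xp, u l⟫)
      have h3 := habs_sub (φ (αs k) (κ l) (κ l * ⟪xp, u l⟫)) (κ l * ⟪xp, u l⟫)
      linarith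
    simp only [hEdef]
    rw [abs_div, abs_of_pos hκl, div_le_iff₀ hκl]
    have h4 : |κ l * ⟪xp, u l⟫| = κ l * |⟪xp, u l⟫| := by
      rw [abs_mul, abs_of_pos hκl]
    nlinarith
  have hEsum : ∀ k, Summable fun l => (E k l)^2 := by
    intro k
    refine Summable.of_nonneg_of_le (fun l => sq_nonneg _) (fun l => ?_) (hccs.mul_left 4)
    nlinarith [hEb k l, sq_abs (E k l), sq_abs ⟪xp, u l⟫, abs_nonneg (E k l),
      abs_nonneg ⟪xp, u l⟫]
  have hgsum : ∀ k, Summable fun l => (g k l)^2 := by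
    intro k
    simp only [hgdef]
    exact hck' k
  have hNabs : ∀ k l, |N k l| ≤ |g k l| + |⟪xp, u l⟫| := by
    intro k l
    have hκl := hκpos l
    have h1 : N k l = g k l - φ (αs k) (κ l) (κ l * ⟪xp, u l⟫) / κ l := by
      simp only [hNdef, hgdef]; ring
    rw [h1]
    refine (habs_sub _ _).trans ?_
    have h2 : |φ (αs k) (κ l) (κ l * ⟪xp, u l⟫) / κ l| ≤ |⟪xp, u l⟫| := by
      rw [abs_div, abs_of_pos hκl, div_le_iff₀ hκl]
      calc |φ (αs k) (κ l) (κ l * ⟪xp, u l⟫)| ≤ |κ l * ⟪xp, u l⟫| := hφabs (hαpos k) hκl _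
        _ = |⟪xp, u l⟫| * κ l := by rw [abs_mul, abs_of_pos hκl]; ring
    linarith
  have hNsum : ∀ k, Summable fun l => (N k l)^2 := by
    intro k
    refine Summable.of_nonneg_of_le (fun l => sq_nonneg _) (fun l => ?_)
      (((hgsum k).mul_left 2).add (hccs.mul_left 2))
    nlinarith [hNabs k l, sq_abs (N k l), sq_abs (g k l), sq_abs ⟪xp, u l⟫,
      abs_nonneg (N k l), abs_nonneg (g k l), abs_nonneg ⟪xp, u l⟫,
      sq_nonneg (|g k l| - |⟪xp, u l⟫|)]
  have hαsIoi : Tendsto αs atTop (nhdsWithin 0 (Set.Ioi 0)) :=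
    tendsto_nhdsWithin_of_tendsto_nhds_of_eventually_within _ hα0 (Eventually.of_forall hαpos)
  -- approximation error tends to zero
  have hE0 : Tendsto (fun k => ∑' l, (E k l)^2) atTop (nhds 0) := by
    have h := tendsto_tsum_of_dominated_convergence (𝓕 := atTop)
      (f := fun k l => (E k l)^2) (g := fun _ => (0:ℝ))
      (bound := fun l => 4 * ⟪xp, u l⟫^2) (hccs.mul_left 4) ?_ ?_
    · simpa using h
    · intro l
      have hφa := (hφconv (κ l) (hκpos l) (κ l * ⟪xp, u l⟫)).comp hαsIoi
      have h2 : Tendsto (fun k => E k l) atTop (nhds 0) := by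
        have h3 := (hφa.sub (tendsto_const_nhds (x := κ l * ⟪xp, u l⟫))).div_const (κ l)
        simp only [hEdef]
        simpa using h3
      simpa using h2.pow 2
    · refine Eventually.of_forall fun k l => ?_
      show ‖(E k l)^2‖ ≤ 4 * ⟪xp, u l⟫^2
      have h5 := hEb k l
      have h6 : ‖(E k l)^2‖ = |E k l|^2 := by
        rw [Real.norm_eq_abs, abs_of_nonneg (sq_nonneg _), sq_abs]
      rw [h6]
      have h7 := mul_self_le_mul_self (abs_nonneg (E k l)) h5
      nlinarith [h7, sq_abs ⟪xp, u l⟫]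
  -- noise part
  set m := Real.sqrt (d / (2*(Mu+1))) with hmdef
  have hmpos : 0 < m := Real.sqrt_pos.mpr (by positivity)
  have hm2 : m^2 = d / (2*(Mu+1)) := Real.sq_sqrt (by positivity)
  have hδα : Tendsto (fun k => δ k / Real.sqrt (αs k)) atTop (nhds 0) := by
    have h1 : Tendsto (fun k => Real.sqrt ((δ k)^2 / αs k)) atTop (nhds 0) := by
      have h2 := (Real.continuous_sqrt.tendsto 0).comp hrate
      simpa [Function.comp_def] using h2
    refine h1.congr fun k => ?_
    rw [Real.sqrt_div (sq_nonneg _), Real.sqrt_sq (hδpos k).le]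
  have hEv : ∀ᶠ k in atTop, Real.sqrt bv * δ k ≤ d/(2*m) * Real.sqrt (αs k) := by
    have h2 : Tendsto (fun k => Real.sqrt bv * (δ k / Real.sqrt (αs k))) atTop (nhds 0) := by
      simpa using hδα.const_mul (Real.sqrt bv)
    filter_upwards [h2.eventually_lt_const (show (0:ℝ) < d/(2*m) by positivity)] with k hk
    have hsα : 0 < Real.sqrt (αs k) := Real.sqrt_pos.mpr (hαpos k)
    have h3 := mul_le_mul_of_nonneg_right hk.le hsα.le
    calc Real.sqrt bv * δ k
        = Real.sqrt bv * (δ k / Real.sqrt (αs k) * Real.sqrt (αs k)) := by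
          rw [div_mul_cancel₀ _ hsα.ne']
      _ = Real.sqrt bv * (δ k / Real.sqrt (αs k)) * Real.sqrt (αs k) := by ring
      _ ≤ d/(2*m) * Real.sqrt (αs k) := h3
  set S : ℕ → ℝ :=
    fun k => ∑' l, (if κ l ≤ m * Real.sqrt (αs k) then ⟪xp, u l⟫^2 else 0) with hSdef
  have hS0 : Tendsto S atTop (nhds 0) := by
    have h := tendsto_tsum_of_dominated_convergence (𝓕 := atTop)
      (f := fun k l => (if κ l ≤ m * Real.sqrt (αs k) then ⟪xp, u l⟫^2 else 0))
      (g := fun _ => (0:ℝ)) (bound := fun l => ⟪xp, u l⟫^2) hccs ?_ ?_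
    · simpa [hSdef] using h
    · intro l
      have hmα : Tendsto (fun k => m * Real.sqrt (αs k)) atTop (nhds 0) := by
        have h2 := (Real.continuous_sqrt.tendsto 0).comp hα0
        have h3 := h2.const_mul m
        simpa using h3
      have hev : ∀ᶠ k in atTop, m * Real.sqrt (αs k) < κ l :=
        hmα.eventually_lt_const (hκpos l)
      refine Tendsto.congr' ?_ (tendsto_const_nhds (x := (0:ℝ)))
      filter_upwards [hev] with k hk
      rw [if_neg (not_le.mpr hk)]
    · refine Eventually.of_forall fun k l => ?_
      simp only [Real.norm_eq_abs]
      split_ifs with h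
      · rw [abs_of_nonneg (sq_nonneg _)]
      · simpa using sq_nonneg ⟪xp, u l⟫
  have hasum : Summable (fun l => (κ l * ⟪xp, u l⟫)^2) := by
    refine Summable.of_nonneg_of_le (fun l => sq_nonneg _) (fun l => ?_) (hccs.mul_left (Kb^2))
    have h1 := hKl l
    have h2 := (hκpos l).le
    nlinarith [sq_nonneg ⟪xp, u l⟫, mul_le_mul h1 h1 h2 (h2.trans h1)]
  have hkey : ∀ᶠ k in atTop, ∑' l, (N k l)^2 ≤
      8*e^2*m^2 * S k + (2*e^2 + 1/m^2) * (bv * (δ k)^2 / αs k) := by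
    filter_upwards [hEv] with k hEvk
    have hα := hαpos k
    have hsα : 0 < Real.sqrt (αs k) := Real.sqrt_pos.mpr hα
    have hs2 : Real.sqrt (αs k)^2 = αs k := Real.sq_sqrt hα.le
    have hpt : ∀ l, (N k l)^2 ≤
        (if κ l ≤ m * Real.sqrt (αs k)
          then e^2/(αs k) * (8*(κ l * ⟪xp, u l⟫)^2 + 2*(nn k l)^2) else 0)
        + (1/(m^2 * αs k)) * (nn k l)^2 := by
      intro l
      have hκl := hκpos l
      have hbval := hbn k l
      by_cases hcase : κ l ≤ m * Real.sqrt (αs k)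
      · rw [if_pos hcase]
        have haabs : |κ l * ⟪xp, u l⟫| ≤ κ l * Mu := by
          rw [abs_mul, abs_of_pos hκl]
          exact mul_le_mul_of_nonneg_left (hMul l) hκl.le
        have hm2' : m^2 * (2*(Mu+1)) = d := by
          rw [hm2]; field_simp
        have hmMu : m * Mu ≤ d/(2*m) := by
          rw [le_div_iff₀ (by positivity)]
          nlinarith [hMu0, sq_nonneg m]
        have haabs2 : |κ l * ⟪xp, u l⟫| ≤ d/(2*m) * Real.sqrt (αs k) := by
          refine haabs.trans ?_
          calc κ l * Mu ≤ m * Real.sqrt (αs k) * Mu :=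
                mul_le_mul_of_nonneg_right hcase hMu0
            _ = m * Mu * Real.sqrt (αs k) := by ring
            _ ≤ d/(2*m) * Real.sqrt (αs k) :=
                mul_le_mul_of_nonneg_right hmMu hsα.le
        have h4 : d/m * Real.sqrt (αs k) ≤ d * αs k / κ l := by
          rw [le_div_iff₀ hκl]
          calc d/m * Real.sqrt (αs k) * κ l
              ≤ d/m * Real.sqrt (αs k) * (m * Real.sqrt (αs k)) := by
                apply mul_le_mul_of_nonneg_left hcase (by positivity)
            _ = d * (Real.sqrt (αs k) * Real.sqrt (αs k)) * (m / m) := by ring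
            _ = d * αs k := by
                rw [div_self hmpos.ne', mul_one, Real.mul_self_sqrt hα.le]
        have hnabs : |nn k l| ≤ d/(2*m) * Real.sqrt (αs k) := (hncomp k l).trans hEvk
        have haB : |κ l * ⟪xp, u l⟫| ≤ d * αs k / κ l := by
          refine haabs2.trans (le_trans ?_ h4)
          have : d/(2*m) ≤ d/m := by
            apply div_le_div_of_nonneg_left hd.le hmpos (by linarith)
          exact mul_le_mul_of_nonneg_right this hsα.le
        have hbB : |⟪yk k, v l⟫| ≤ d * αs k / κ l := by
          rw [hbval]
          calc |κ l * ⟪xp, u l⟫ + nn k l| ≤ |κ l * ⟪xp, u l⟫| + |nn k l| := abs_add_le _ _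
            _ ≤ d/(2*m) * Real.sqrt (αs k) + d/(2*m) * Real.sqrt (αs k) :=
                add_le_add haabs2 hnabs
            _ = d/m * Real.sqrt (αs k) := by ring
            _ ≤ d * αs k / κ l := h4
        have hφbB := hB2 (κ l) hκl (αs k) hα ⟪yk k, v l⟫ hbB
        have hφaB := hB2 (κ l) hκl (αs k) hα (κ l * ⟪xp, u l⟫) haB
        have hNb : |N k l| ≤ e/Real.sqrt (αs k) * (2*|κ l * ⟪xp, u l⟫| + |nn k l|) := by
          simp only [hNdef]
          rw [abs_div, abs_of_pos hκl, div_le_iff₀ hκl]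
          have habs2 : |⟪yk k, v l⟫| ≤ |κ l * ⟪xp, u l⟫| + |nn k l| := by
            rw [hbval]; exact abs_add_le _ _
          calc |φ (αs k) (κ l) ⟪yk k, v l⟫ - φ (αs k) (κ l) (κ l * ⟪xp, u l⟫)|
              ≤ |φ (αs k) (κ l) ⟪yk k, v l⟫| + |φ (αs k) (κ l) (κ l * ⟪xp, u l⟫)| :=
                habs_sub _ _
            _ ≤ e * κ l / Real.sqrt (αs k) * |⟪yk k, v l⟫|
                + e * κ l / Real.sqrt (αs k) * |κ l * ⟪xp, u l⟫| := add_le_add hφbB hφaB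
            _ ≤ e * κ l / Real.sqrt (αs k) * (|κ l * ⟪xp, u l⟫| + |nn k l|)
                + e * κ l / Real.sqrt (αs k) * |κ l * ⟪xp, u l⟫| := by
                  have h5 : (0:ℝ) ≤ e * κ l / Real.sqrt (αs k) := by positivity
                  nlinarith [mul_le_mul_of_nonneg_left habs2 h5]
            _ = e/Real.sqrt (αs k) * (2*|κ l * ⟪xp, u l⟫| + |nn k l|) * κ l := by ring
        have h6 := pow_le_pow_left₀ (abs_nonneg _) hNb 2
        rw [sq_abs] at h6
        have h7 : (e/Real.sqrt (αs k) * (2*|κ l * ⟪xp, u l⟫| + |nn k l|))^2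
            = e^2/(αs k) * (2*|κ l * ⟪xp, u l⟫| + |nn k l|)^2 := by
          rw [mul_pow, div_pow, hs2]
        have h8 : (2*|κ l * ⟪xp, u l⟫| + |nn k l|)^2
            ≤ 8*(κ l * ⟪xp, u l⟫)^2 + 2*(nn k l)^2 := by
          nlinarith [sq_nonneg (2*|κ l * ⟪xp, u l⟫| - |nn k l|), sq_abs (κ l * ⟪xp, u l⟫),
            sq_abs (nn k l), abs_nonneg (κ l * ⟪xp, u l⟫), abs_nonneg (nn k l)]
        have h9 : (N k l)^2 ≤ e^2/(αs k) * (8*(κ l * ⟪xp, u l⟫)^2 + 2*(nn k l)^2) := by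
          rw [h7] at h6
          refine h6.trans (mul_le_mul_of_nonneg_left h8 (by positivity))
        have h10 : (0:ℝ) ≤ (1/(m^2 * αs k)) * (nn k l)^2 := by positivity
        linarith
      · rw [if_neg hcase]
        push_neg at hcase
        have hNb : |N k l| ≤ |nn k l| / (m * Real.sqrt (αs k)) := by
          simp only [hNdef]
          rw [abs_div, abs_of_pos hκl]
          have hlip := hφlip (αs k) hα (κ l) hκl ⟪yk k, v l⟫ (κ l * ⟪xp, u l⟫)
          have h1 : |⟪yk k, v l⟫ - κ l * ⟪xp, u l⟫| = |nn k l| := by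
            rw [hbval]; congr 1; ring
          rw [h1] at hlip
          exact div_le_div₀ (abs_nonneg _) hlip (by positivity) hcase.le
        have h6 := pow_le_pow_left₀ (abs_nonneg _) hNb 2
        rw [sq_abs] at h6
        have h7 : (|nn k l| / (m * Real.sqrt (αs k)))^2 = (1/(m^2 * αs k)) * (nn k l)^2 := by
          rw [div_pow, mul_pow, hs2, sq_abs]
          ring
        rw [h7] at h6
        linarith
    have hBndsum1 : Summable (fun l => (if κ l ≤ m * Real.sqrt (αs k)
        then e^2/(αs k) * (8*(κ l * ⟪xp, u l⟫)^2 + 2*(nn k l)^2) else 0)) := by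
      refine Summable.of_nonneg_of_le (fun l => ?_) (fun l => ?_)
        (((hasum.mul_left 8).add ((hnsum k).mul_left 2)).mul_left (e^2/(αs k)))
      · split_ifs
        · positivity
        · exact le_rfl
      · split_ifs
        · exact le_rfl
        · positivity
    have hBndsum2 : Summable (fun l => (1/(m^2 * αs k)) * (nn k l)^2) := (hnsum k).mul_left _
    have hindsum : Summable (fun l => (if κ l ≤ m * Real.sqrt (αs k) then ⟪xp, u l⟫^2 else 0)) := by
      refine Summable.of_nonneg_of_le (fun l => ?_) (fun l => ?_) hccs
      · split_ifs
        · exact sq_nonneg _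
        · exact le_rfl
      · split_ifs
        · exact le_rfl
        · exact sq_nonneg _
    have h8 : ∀ l, (if κ l ≤ m * Real.sqrt (αs k)
        then e^2/(αs k) * (8*(κ l * ⟪xp, u l⟫)^2 + 2*(nn k l)^2) else 0)
        ≤ 8*e^2*m^2 * (if κ l ≤ m * Real.sqrt (αs k) then ⟪xp, u l⟫^2 else 0)
          + 2*e^2/(αs k) * (nn k l)^2 := by
      intro l
      split_ifs with h
      · have hκ2 : (κ l)^2 ≤ m^2 * αs k := by
          have h1 : (κ l)^2 ≤ (m * Real.sqrt (αs k))^2 :=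
            pow_le_pow_left₀ (hκpos l).le h 2
          calc (κ l)^2 ≤ (m * Real.sqrt (αs k))^2 := h1
            _ = m^2 * αs k := by rw [mul_pow, hs2]
        have h2 : e^2/(αs k) * (8*(κ l * ⟪xp, u l⟫)^2)
            ≤ 8*e^2*m^2 * ⟪xp, u l⟫^2 := by
          have h3 : (κ l * ⟪xp, u l⟫)^2 = (κ l)^2 * ⟪xp, u l⟫^2 := by rw [mul_pow]
          have h4 : (κ l)^2 * ⟪xp, u l⟫^2 ≤ m^2 * αs k * ⟪xp, u l⟫^2 :=
            mul_le_mul_of_nonneg_right hκ2 (sq_nonneg _)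
          calc e^2/(αs k) * (8*(κ l * ⟪xp, u l⟫)^2)
              ≤ e^2/(αs k) * (8*(m^2 * αs k * ⟪xp, u l⟫^2)) := by
                rw [h3]
                apply mul_le_mul_of_nonneg_left _ (by positivity)
                nlinarith
            _ = 8*e^2*m^2 * ⟪xp, u l⟫^2 := by
                rw [div_mul_eq_mul_div, div_eq_iff hα.ne']
                ring
        have heq : e^2/(αs k) * (8*(κ l * ⟪xp, u l⟫)^2 + 2*(nn k l)^2)
            = e^2/(αs k) * (8*(κ l * ⟪xp, u l⟫)^2) + 2*e^2/(αs k) * (nn k l)^2 := by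
          ring
        rw [heq]
        have h10 : 2*e^2/(αs k) * (nn k l)^2 ≤ 2*e^2/(αs k) * (nn k l)^2 := le_rfl
        linarith
      · positivity
    calc ∑' l, (N k l)^2
        ≤ ∑' l, ((if κ l ≤ m * Real.sqrt (αs k)
            then e^2/(αs k) * (8*(κ l * ⟪xp, u l⟫)^2 + 2*(nn k l)^2) else 0)
          + (1/(m^2 * αs k)) * (nn k l)^2) :=
          Summable.tsum_le_tsum hpt (hNsum k) (hBndsum1.add hBndsum2)
      _ = (∑' l, (if κ l ≤ m * Real.sqrt (αs k)
            then e^2/(αs k) * (8*(κ l * ⟪xp, u l⟫)^2 + 2*(nn k l)^2) else 0))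
          + ∑' l, (1/(m^2 * αs k)) * (nn k l)^2 := Summable.tsum_add hBndsum1 hBndsum2
      _ ≤ (8*e^2*m^2 * S k + 2*e^2/(αs k) * (bv * (δ k)^2))
          + (1/(m^2 * αs k)) * (bv * (δ k)^2) := by
          have hA1 : (∑' l, (if κ l ≤ m * Real.sqrt (αs k)
              then e^2/(αs k) * (8*(κ l * ⟪xp, u l⟫)^2 + 2*(nn k l)^2) else 0))
              ≤ 8*e^2*m^2 * S k + 2*e^2/(αs k) * (bv * (δ k)^2) := by
            have hsum8 : Summable (fun l =>
                8*e^2*m^2 * (if κ l ≤ m * Real.sqrt (αs k) then ⟪xp, u l⟫^2 else 0)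
                + 2*e^2/(αs k) * (nn k l)^2) :=
              (hindsum.mul_left _).add ((hnsum k).mul_left _)
            refine (Summable.tsum_le_tsum h8 hBndsum1 hsum8).trans ?_
            rw [Summable.tsum_add (hindsum.mul_left _) ((hnsum k).mul_left _),
              tsum_mul_left, tsum_mul_left]
            have hS' : S k = ∑' l, (if κ l ≤ m * Real.sqrt (αs k) then ⟪xp, u l⟫^2 else 0) := by
              rw [hSdef]
            rw [← hS']
            have h11 : 2*e^2/(αs k) * (∑' l, (nn k l)^2) ≤ 2*e^2/(αs k) * (bv * (δ k)^2) :=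
              mul_le_mul_of_nonneg_left (hntsum k) (by positivity)
            linarith
          have hA2 : ∑' l, (1/(m^2 * αs k)) * (nn k l)^2
              ≤ (1/(m^2 * αs k)) * (bv * (δ k)^2) := by
            rw [tsum_mul_left]
            exact mul_le_mul_of_nonneg_left (hntsum k) (by positivity)
          linarith
      _ = 8*e^2*m^2 * S k + (2*e^2 + 1/m^2) * (bv * (δ k)^2 / αs k) := by
          field_simp
          ring
  have hN0 : Tendsto (fun k => ∑' l, (N k l)^2) atTop (nhds 0) := by
    refine squeeze_zero' (Eventually.of_forall fun k => tsum_nonneg fun l => sq_nonneg _)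
      hkey ?_
    have h1 : Tendsto (fun k => 8*e^2*m^2 * S k) atTop (nhds 0) := by
      simpa using hS0.const_mul (8*e^2*m^2)
    have h2 : Tendsto (fun k => (2*e^2 + 1/m^2) * (bv * (δ k)^2 / αs k)) atTop (nhds 0) := by
      have h3 := hrate.const_mul ((2*e^2 + 1/m^2) * bv)
      have h4 : ∀ k, (2*e^2 + 1/m^2) * bv * ((δ k)^2 / αs k)
          = (2*e^2 + 1/m^2) * (bv * (δ k)^2 / αs k) := by intro k; ring
      simp only [h4] at h3
      simpa using h3
    simpa using h1.add h2
  have hkey2 : ∀ k, ∑' l, (g k l - ⟪xp, u l⟫)^2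
      ≤ 2*(∑' l, (N k l)^2) + 2*(∑' l, (E k l)^2) := by
    intro k
    have hp : ∀ l, (g k l - ⟪xp, u l⟫)^2 ≤ 2*(N k l)^2 + 2*(E k l)^2 := by
      intro l
      rw [hsplit k l]
      nlinarith [sq_nonneg (N k l - E k l)]
    have hsum2 : Summable fun l => 2*(N k l)^2 + 2*(E k l)^2 :=
      ((hNsum k).mul_left 2).add ((hEsum k).mul_left 2)
    have hsum1 : Summable fun l => (g k l - ⟪xp, u l⟫)^2 :=
      Summable.of_nonneg_of_le (fun l => sq_nonneg _) hp hsum2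
    calc ∑' l, (g k l - ⟪xp, u l⟫)^2 ≤ ∑' l, (2*(N k l)^2 + 2*(E k l)^2) :=
        Summable.tsum_le_tsum hp hsum1 hsum2
      _ = 2*(∑' l, (N k l)^2) + 2*(∑' l, (E k l)^2) := by
          rw [Summable.tsum_add ((hNsum k).mul_left 2) ((hEsum k).mul_left 2),
            tsum_mul_left, tsum_mul_left]
  have key : Tendsto (fun k => ∑' l, (g k l - ⟪xp, u l⟫)^2) atTop (nhds 0) := by
    refine squeeze_zero (fun k => tsum_nonneg fun l => sq_nonneg _) hkey2 ?_
    simpa using (hN0.const_mul 2).add (hE0.const_mul 2)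
  -- conclude
  have hGk : Tendsto (fun k => (⟨fun l => φ (αs k) (κ l) ⟪yk k, v l⟫ / κ l, hck k⟩ :
      lp (fun _ : Λ => ℝ) 2)) atTop (nhds Cp) := by
    rw [tendsto_iff_norm_sub_tendsto_zero]
    have hnorm : ∀ k, ‖(⟨fun l => φ (αs k) (κ l) ⟪yk k, v l⟫ / κ l, hck k⟩ :
        lp (fun _ : Λ => ℝ) 2) - Cp‖ = Real.sqrt (∑' l, (g k l - ⟪xp, u l⟫)^2) := by
      intro k
      have hp2 : 0 < (2:ℝ≥0∞).toReal := by norm_num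
      have h2 := lp.norm_rpow_eq_tsum hp2
        ((⟨fun l => φ (αs k) (κ l) ⟪yk k, v l⟫ / κ l, hck k⟩ : lp (fun _ : Λ => ℝ) 2) - Cp)
      have h3 : ‖(⟨fun l => φ (αs k) (κ l) ⟪yk k, v l⟫ / κ l, hck k⟩ :
          lp (fun _ : Λ => ℝ) 2) - Cp‖^2 = ∑' l, (g k l - ⟪xp, u l⟫)^2 := by
        have h4 : ∀ l, ((⟨fun l => φ (αs k) (κ l) ⟪yk k, v l⟫ / κ l, hck k⟩ :
            lp (fun _ : Λ => ℝ) 2) - Cp) l = g k l - ⟪xp, u l⟫ := by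
          intro l
          rw [lp.coeFn_sub]
          rfl
        simpa [ENNReal.toReal_ofNat, Real.rpow_natCast, sq_abs, h4] using h2
      rw [← h3, Real.sqrt_sq (norm_nonneg _)]
    simp only [hnorm]
    exact (Real.continuous_sqrt.tendsto' 0 0 Real.sqrt_zero).comp key
  have hTG := (T.continuous.tendsto Cp).comp hGk
  rw [hTC] at hTG
  have h9 : Tendsto (fun k => ⟪(T ∘ fun k => (⟨fun l => φ (αs k) (κ l) ⟪yk k, v l⟫ / κ l,
      hck k⟩ : lp (fun _ : Λ => ℝ) 2)) k, w⟫) atTop (nhds ⟪xp, w⟫) :=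
    Tendsto.inner (𝕜 := ℝ) hTG tendsto_const_nhds
  simpa [Function.comp] using h9
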